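/- Let m ≥ 1 and set x_j := sin²(π(2j−1)/(4m)) for j = 1,…,m. Then the coefficients a_j := ((−1)^{j+1}/m) · cot(π(2j−1)/(4m)) satisfy ∑_{j=1}^m a_j · x_j^{i-1} = δ_{i,1} for every i ∈ {1,…,m}. -/

import Mathlib

open Real Finset

noncomputable def tt (m j : ℕ) : ℝ := Real.pi * (2 * j + 1) / (4 * m)

lemma tt_pos (m j : ℕ) (hm : 1 ≤ m) : 0 < tt m j := by
  have hm' : (0:ℝ) < m := by exact_mod_cast hm
  have h2 : (0:ℝ) < 2 * (j:ℝ) + 1 := by positivity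
  unfold tt
  have := Real.pi_pos
  positivity

lemma tt_lt_pi (m j : ℕ) (hm : 1 ≤ m) (hj : j < m) : tt m j < Real.pi := by
  have hm' : (0:ℝ) < m := by exact_mod_cast hm
  unfold tt
  rw [div_lt_iff₀ (by positivity)]
  have hj' : (j:ℝ) < m := by exact_mod_cast hj
  nlinarith [mul_lt_mul_of_pos_left (show 2*(j:ℝ)+1 < 4*m by have : (1:ℝ) ≤ m := (by exact_mod_cast hm); linarith) Real.pi_pos]

lemma sin_tt_pos (m j : ℕ) (hm : 1 ≤ m) (hj : j < m) : 0 < Real.sin (tt m j) :=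
  Real.sin_pos_of_pos_of_lt_pi (tt_pos m j hm) (tt_lt_pi m j hm hj)

lemma sum_cos_eq_zero (m : ℕ) (hm : 1 ≤ m) (s : ℕ) (hs1 : 1 ≤ s) (hs2 : s < 2 * m) :
    ∑ j ∈ range m, Real.cos (2 * s * tt m j) = 0 := by
  have hm' : (0:ℝ) < m := by exact_mod_cast hm
  set α : ℝ := s * Real.pi / (2 * m) with hα
  have harg : ∀ j : ℕ, 2 * (s:ℝ) * tt m j = 2 * j * α + α := by
    intro j; unfold tt; rw [hα]; field_simp; ring
  have hαpos : 0 < α := by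
    rw [hα]
    have : (0:ℝ) < s := by exact_mod_cast hs1
    have := Real.pi_pos
    positivity
  have hαlt : α < Real.pi := by
    rw [hα, div_lt_iff₀ (by positivity)]
    have hs' : (s:ℝ) < 2 * m := by exact_mod_cast hs2
    nlinarith [Real.pi_pos]
  have hsin : Real.sin α ≠ 0 := ne_of_gt (Real.sin_pos_of_pos_of_lt_pi hαpos hαlt)
  have tele : ∑ j ∈ range m, (Real.sin (2 * ((j:ℝ)+1) * α) - Real.sin (2 * (j:ℝ) * α)) =
      Real.sin (2 * (m:ℝ) * α) - Real.sin (2 * (0:ℝ) * α) := by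
    have := Finset.sum_range_sub (f := fun j : ℕ => Real.sin (2 * (j:ℝ) * α)) m
    simpa using this
  have hend : Real.sin (2 * (m:ℝ) * α) = 0 := by
    have : 2 * (m:ℝ) * α = s * Real.pi := by rw [hα]; field_simp
    rw [this, Real.sin_nat_mul_pi]
  have term : ∀ j : ℕ, Real.sin (2 * ((j:ℝ)+1) * α) - Real.sin (2 * (j:ℝ) * α)
      = 2 * Real.sin α * Real.cos (2 * (j:ℝ) * α + α) := by
    intro j
    have h1 : 2 * ((j:ℝ)+1) * α = (2 * (j:ℝ) * α + α) + α := by ring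
    have h2 : 2 * (j:ℝ) * α = (2 * (j:ℝ) * α + α) - α := by ring
    have a1 := congrArg Real.sin h1
    have a2 := congrArg Real.sin h2
    rw [Real.sin_add] at a1
    rw [Real.sin_sub] at a2
    rw [a1, a2]
    ring
  have hz : (2 * Real.sin α) * ∑ j ∈ range m, Real.cos (2 * (j:ℝ) * α + α) = 0 := by
    rw [Finset.mul_sum]
    rw [Finset.sum_congr rfl (fun j _ => (term j).symm), tele, hend]
    simp
  have hsum : ∑ j ∈ range m, Real.cos (2 * (j:ℝ) * α + α) = 0 := by
    rcases mul_eq_zero.mp hz with h | h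
    · exact absurd h (by simpa using hsin)
    · exact h
  calc ∑ j ∈ range m, Real.cos (2 * s * tt m j)
      = ∑ j ∈ range m, Real.cos (2 * (j:ℝ) * α + α) :=
        Finset.sum_congr rfl (fun j _ => by rw [harg j])
    _ = 0 := hsum

lemma sin_odd_mul (r : ℕ) (t : ℝ) :
    Real.sin ((2 * r + 1) * t) =
      Real.sin t * (1 + 2 * ∑ s ∈ range r, Real.cos (2 * ((s:ℝ) + 1) * t)) := by
  induction r with
  | zero => simp
  | succ n ih =>
    rw [Finset.sum_range_succ]
    have hc : ((2 * ((n:ℕ)+1) + 1 : ℝ)) * t = ((2 * (n:ℝ) + 2) * t) + t := by push_cast; ring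
    have hc2 : ((2 * (n:ℕ) + 1 : ℝ)) * t = ((2 * (n:ℝ) + 2) * t) - t := by push_cast; ring
    push_cast
    have a1 := congrArg Real.sin (show (2 * ((n:ℝ)+1) + 1) * t = ((2 * (n:ℝ) + 2) * t) + t by ring)
    rw [Real.sin_add] at a1
    have a2 := congrArg Real.sin (show (2 * (n:ℝ) + 1) * t = ((2 * (n:ℝ) + 2) * t) - t by ring)
    rw [Real.sin_sub] at a2
    have a3 := congrArg Real.cos (show 2 * ((n:ℝ) + 1) * t = (2 * (n:ℝ) + 2) * t by ring)
    rw [a1, a3]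
    rw [a2] at ih
    linarith [ih]

lemma sum_dirichlet (m : ℕ) (hm : 1 ≤ m) (r : ℕ) (hr : r < 2 * m) :
    ∑ j ∈ range m, Real.sin ((2 * (r:ℝ) + 1) * tt m j) / Real.sin (tt m j) = m := by
  have h1 : ∀ j ∈ range m, Real.sin ((2 * (r:ℝ) + 1) * tt m j) / Real.sin (tt m j)
      = 1 + 2 * ∑ s ∈ range r, Real.cos (2 * ((s:ℝ) + 1) * tt m j) := by
    intro j hj
    rw [sin_odd_mul, mul_comm, mul_div_assoc]
    rw [div_self (ne_of_gt (sin_tt_pos m j hm (Finset.mem_range.mp hj))), mul_one]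
  rw [Finset.sum_congr rfl h1, Finset.sum_add_distrib, Finset.sum_const, Finset.card_range]
  have h2 : ∑ j ∈ range m, 2 * ∑ s ∈ range r, Real.cos (2 * ((s:ℝ) + 1) * tt m j) = 0 := by
    have : ∀ j ∈ range m, 2 * ∑ s ∈ range r, Real.cos (2 * ((s:ℝ) + 1) * tt m j)
        = ∑ s ∈ range r, 2 * Real.cos (2 * ((s:ℝ) + 1) * tt m j) := by
      intro j _; rw [Finset.mul_sum]
    rw [Finset.sum_congr rfl this, Finset.sum_comm]
    apply Finset.sum_eq_zero
    intro s hs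
    have hs' : s + 1 < 2 * m := by
      have := Finset.mem_range.mp hs; omega
    have := sum_cos_eq_zero m hm (s+1) (by omega) hs'
    have harg : ∀ j : ℕ, 2 * ((s:ℝ)+1) * tt m j = 2 * ((s+1 : ℕ):ℝ) * tt m j := by
      intro j; push_cast; ring
    calc ∑ j ∈ range m, 2 * Real.cos (2 * ((s:ℝ) + 1) * tt m j)
        = 2 * ∑ j ∈ range m, Real.cos (2 * ((s+1:ℕ):ℝ) * tt m j) := by
          rw [Finset.mul_sum]
          exact Finset.sum_congr rfl (fun j _ => by rw [harg j])
      _ = 0 := by rw [this]; ring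
  rw [h2]
  simp

lemma four_sin (A B C : ℝ) : 4 * Real.sin A * Real.cos B * Real.cos C =
    Real.sin (A + C + B) + Real.sin (A + C - B) + Real.sin (A - C + B) + Real.sin (A - C - B) := by
  simp [Real.sin_add, Real.sin_sub, Real.cos_add, Real.cos_sub]
  ring

lemma sign_eq (m j : ℕ) (hm : 1 ≤ m) : Real.sin (2 * (m:ℝ) * tt m j) = (-1:ℝ)^j := by
  have hm' : (m:ℝ) ≠ 0 := by
    have : (0:ℝ) < m := by exact_mod_cast hm
    linarith
  have harg : 2 * (m:ℝ) * tt m j = (j:ℝ) * Real.pi + Real.pi / 2 := by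
    unfold tt; field_simp; ring
  rw [harg, Real.sin_add, Real.sin_pi_div_two, Real.cos_pi_div_two]
  have : Real.cos ((j:ℝ) * Real.pi) = (-1:ℝ)^j := by
    have := Real.cos_nat_mul_pi_sub 0 j
    simpa using this
  rw [this]
  ring

lemma key_sum (m : ℕ) (hm : 1 ≤ m) (k : ℕ) (hk : k < m) :
    ∑ j ∈ range m, (-1:ℝ)^j * (Real.cos (tt m j) / Real.sin (tt m j)) * Real.cos (2 * (k:ℝ) * tt m j)
      = m := by
  have hr2 : ((m + k - 1 : ℕ):ℝ) = (m:ℝ) + (k:ℝ) - 1 := by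
    rw [Nat.cast_sub (by omega : 1 ≤ m + k)]; push_cast; ring
  have hr3 : ((m - k : ℕ):ℝ) = (m:ℝ) - (k:ℝ) := by
    rw [Nat.cast_sub (by omega : k ≤ m)]
  have hr4 : ((m - k - 1 : ℕ):ℝ) = (m:ℝ) - (k:ℝ) - 1 := by
    rw [show m - k - 1 = m - (k+1) by omega, Nat.cast_sub (by omega : k + 1 ≤ m)]
    push_cast; ring
  have point : ∀ j ∈ range m,
      (-1:ℝ)^j * (Real.cos (tt m j) / Real.sin (tt m j)) * Real.cos (2 * (k:ℝ) * tt m j)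
      = (Real.sin ((2 * ((m+k:ℕ):ℝ) + 1) * tt m j) / Real.sin (tt m j)
        + Real.sin ((2 * ((m+k-1:ℕ):ℝ) + 1) * tt m j) / Real.sin (tt m j)
        + Real.sin ((2 * ((m-k:ℕ):ℝ) + 1) * tt m j) / Real.sin (tt m j)
        + Real.sin ((2 * ((m-k-1:ℕ):ℝ) + 1) * tt m j) / Real.sin (tt m j)) / 4 := by
    intro j hj
    set t := tt m j with ht
    have hs : Real.sin t ≠ 0 := ne_of_gt (sin_tt_pos m j hm (Finset.mem_range.mp hj))
    have h4 := four_sin (2*(m:ℝ)*t) t (2*(k:ℝ)*t)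
    rw [show 2*(m:ℝ)*t + 2*(k:ℝ)*t + t = (2*((m+k:ℕ):ℝ)+1)*t by push_cast; ring] at h4
    rw [show 2*(m:ℝ)*t + 2*(k:ℝ)*t - t = (2*((m+k-1:ℕ):ℝ)+1)*t by rw [hr2]; ring] at h4
    rw [show 2*(m:ℝ)*t - 2*(k:ℝ)*t + t = (2*((m-k:ℕ):ℝ)+1)*t by rw [hr3]; ring] at h4
    rw [show 2*(m:ℝ)*t - 2*(k:ℝ)*t - t = (2*((m-k-1:ℕ):ℝ)+1)*t by rw [hr4]; ring] at h4
    calc (-1:ℝ)^j * (Real.cos t / Real.sin t) * Real.cos (2 * (k:ℝ) * t)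
        = (4 * Real.sin (2*(m:ℝ)*t) * Real.cos t * Real.cos (2*(k:ℝ)*t)) / Real.sin t / 4 := by
          rw [sign_eq m j hm]; ring
      _ = (Real.sin ((2 * ((m+k:ℕ):ℝ) + 1) * t) + Real.sin ((2 * ((m+k-1:ℕ):ℝ) + 1) * t)
            + Real.sin ((2 * ((m-k:ℕ):ℝ) + 1) * t) + Real.sin ((2 * ((m-k-1:ℕ):ℝ) + 1) * t))
            / Real.sin t / 4 := by rw [h4]
      _ = _ := by ring
  rw [Finset.sum_congr rfl point]
  rw [← Finset.sum_div, Finset.sum_add_distrib, Finset.sum_add_distrib, Finset.sum_add_distrib]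
  rw [sum_dirichlet m hm (m+k) (by omega), sum_dirichlet m hm (m+k-1) (by omega),
      sum_dirichlet m hm (m-k) (by omega), sum_dirichlet m hm (m-k-1) (by omega)]
  ring

lemma ptwise (i : ℕ) (k t : ℝ) :
    Real.sin t ^ (2*(i+1)) * Real.cos (2*k*t)
      = Real.sin t ^ (2*i) * Real.cos (2*k*t) / 2
        - Real.sin t ^ (2*i) * Real.cos (2*(k+1)*t) / 4
        - Real.sin t ^ (2*i) * Real.cos (2*(k-1)*t) / 4 := by
  have h1 := congrArg Real.cos (show 2*(k+1)*t = 2*k*t + 2*t by ring)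
  rw [Real.cos_add] at h1
  have h2 := congrArg Real.cos (show 2*(k-1)*t = 2*k*t - 2*t by ring)
  rw [Real.cos_sub] at h2
  have h3 : Real.cos (2*t) = 1 - 2*Real.sin t^2 := by
    rw [Real.cos_two_mul]
    nlinarith [Real.sin_sq_add_cos_sq t]
  rw [h1, h2, h3]
  ring

lemma main_sum (m : ℕ) (hm : 1 ≤ m) :
    ∀ i k : ℕ, i + k < m →
      ∑ j ∈ range m, (-1:ℝ)^j * (Real.cos (tt m j) / Real.sin (tt m j))
        * (Real.sin (tt m j) ^ (2*i) * Real.cos (2 * (k:ℝ) * tt m j))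
      = if i = 0 then (m:ℝ) else 0 := by
  intro i
  induction i with
  | zero =>
    intro k hk
    simp only [Nat.mul_zero, pow_zero, one_mul, if_pos rfl]
    rw [← key_sum m hm k (by omega)]
    exact Finset.sum_congr rfl (fun j _ => by ring)
  | succ n ih =>
    intro k hk
    have step : ∀ k1 k2 k3 : ℕ,
        (∀ t : ℝ, Real.cos (2*((k1:ℝ)+1)*t) = Real.cos (2*(k2:ℝ)*t)) →
        (∀ t : ℝ, Real.cos (2*((k1:ℝ)-1)*t) = Real.cos (2*(k3:ℝ)*t)) →
        n + k2 < m → n + k3 < m → n + k1 < m →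
        ∑ j ∈ range m, (-1:ℝ)^j * (Real.cos (tt m j) / Real.sin (tt m j))
          * (Real.sin (tt m j) ^ (2*(n+1)) * Real.cos (2 * (k1:ℝ) * tt m j)) = 0 := by
      intro k1 k2 k3 h12 h13 hb2 hb3 hb1
      have point : ∀ j ∈ range m,
          (-1:ℝ)^j * (Real.cos (tt m j) / Real.sin (tt m j))
            * (Real.sin (tt m j) ^ (2*(n+1)) * Real.cos (2 * (k1:ℝ) * tt m j))
          = ((-1:ℝ)^j * (Real.cos (tt m j) / Real.sin (tt m j))
              * (Real.sin (tt m j) ^ (2*n) * Real.cos (2 * (k1:ℝ) * tt m j))) / 2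
            - ((-1:ℝ)^j * (Real.cos (tt m j) / Real.sin (tt m j))
              * (Real.sin (tt m j) ^ (2*n) * Real.cos (2 * (k2:ℝ) * tt m j))) / 4
            - ((-1:ℝ)^j * (Real.cos (tt m j) / Real.sin (tt m j))
              * (Real.sin (tt m j) ^ (2*n) * Real.cos (2 * (k3:ℝ) * tt m j))) / 4 := by
        intro j hj
        have hp := ptwise n (k1:ℝ) (tt m j)
        rw [h12 (tt m j), h13 (tt m j)] at hp
        rw [hp]
        ring
      rw [Finset.sum_congr rfl point, Finset.sum_sub_distrib, Finset.sum_sub_distrib,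
        ← Finset.sum_div, ← Finset.sum_div, ← Finset.sum_div,
        ih k1 hb1, ih k2 hb2, ih k3 hb3]
      split <;> ring
    have hres : ∑ j ∈ range m, (-1:ℝ)^j * (Real.cos (tt m j) / Real.sin (tt m j))
          * (Real.sin (tt m j) ^ (2*(n+1)) * Real.cos (2 * (k:ℝ) * tt m j)) = 0 := by
      rcases Nat.eq_zero_or_pos k with hk0 | hkpos
      · subst hk0
        refine step 0 1 1 (fun t => congrArg Real.cos (by push_cast; ring)) (fun t => ?_)
          (by omega) (by omega) (by omega)
        rw [show 2*(((0:ℕ):ℝ)-1)*t = -(2*((1:ℕ):ℝ)*t) by push_cast; ring, Real.cos_neg]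
      · obtain ⟨k', rfl⟩ : ∃ k', k = k' + 1 := ⟨k - 1, by omega⟩
        refine step (k'+1) (k'+2) k'
          (fun t => congrArg Real.cos (by push_cast; ring))
          (fun t => congrArg Real.cos (by push_cast; ring))
          (by omega) (by omega) (by omega)
    rw [hres]
    simp



/-- At the Chebyshev points `x j = sin² (π (2 j - 1) / (4 m))`, `j = 1, …, m`
(indexed from `0` below, so `2 j - 1` becomes `2 j + 1` and `(-1) ^ (j + 1)` becomes
`(-1) ^ j`), the coefficients `a j = ((-1) ^ (j + 1) / m) * cot (π (2 j - 1) / (4 m))`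
solve the Vandermonde system `∑ j, a j * (x j) ^ (i - 1) = δ_{i,1}`. -/
theorem chebyshev_multiproduct_coefficients (m : ℕ) (hm : 1 ≤ m)
    (x a : Fin m → ℝ)
    (hx : ∀ j : Fin m,
      x j = Real.sin (Real.pi * (2 * (j : ℕ) + 1) / (4 * m)) ^ 2)
    (ha : ∀ j : Fin m,
      a j = ((-1 : ℝ) ^ (j : ℕ) / m) *
        (Real.cos (Real.pi * (2 * (j : ℕ) + 1) / (4 * m)) /
          Real.sin (Real.pi * (2 * (j : ℕ) + 1) / (4 * m)))) :
    ∀ i : Fin m, ∑ j, a j * (x j) ^ (i : ℕ) = if (i : ℕ) = 0 then 1 else 0 := by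
  intro i
  have hm' : (m:ℝ) ≠ 0 := by
    have : (0:ℝ) < m := by exact_mod_cast hm
    linarith
  have key := main_sum m hm (i:ℕ) 0 (by simpa using i.isLt)
  have h1 : ∑ j, a j * (x j) ^ (i:ℕ)
      = ∑ j ∈ range m, (1/(m:ℝ)) * ((-1:ℝ)^j * (Real.cos (tt m j) / Real.sin (tt m j))
          * (Real.sin (tt m j) ^ (2*(i:ℕ)) * Real.cos (2 * ((0:ℕ):ℝ) * tt m j))) := by
    rw [← Fin.sum_univ_eq_sum_range (fun j => (1/(m:ℝ)) * ((-1:ℝ)^j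
      * (Real.cos (tt m j) / Real.sin (tt m j))
      * (Real.sin (tt m j) ^ (2*(i:ℕ)) * Real.cos (2 * ((0:ℕ):ℝ) * tt m j)))) m]
    apply Finset.sum_congr rfl
    intro j _
    rw [hx j, ha j]
    have h0 : Real.cos (2 * ((0:ℕ):ℝ) * tt m (j:ℕ)) = 1 := by norm_num
    rw [h0]
    unfold tt
    rw [← pow_mul]
    ring
  rw [h1, ← Finset.mul_sum, key]
  split <;> field_simp <;> ring
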